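/- Let P be an elementary existential doctrine (a contravariant functor from a category C with finite products to inf-semilattices, with fibered equalities and left adjoints to reindexing along projections satisfying Beck–Chevalley and Frobenius). If q : A → A/ρ is an effective quotient arrow for a P-equivalence relation ρ (i.e. ρ = P(q×q)(δ_{A/ρ})), then q is of effective descent (the map P(q) : P(A/ρ) → Des(ρ) onto descent data is an isomorphism) if and only if q is P-surjective, i.e. ∃_q(⊤_A) = ⊤_{A/ρ}. -/

import Mathlib

open CategoryTheory CategoryTheory.Limits Opposite

noncomputable section

universe w v u

namespace DoctrinePaper

variable {C : Type u} [Category.{v} C] [HasFiniteProducts C]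

/-- The fiber of a primary doctrine `P : Cᵒᵖ ⥤ SemilatInfCat` over an object `A`. -/
abbrev Fib (P : Cᵒᵖ ⥤ SemilatInfCat.{w}) (A : C) : Type w :=
  ↥(P.obj (op A))

/-- Reindexing along an arrow `f : A ⟶ B`. -/
def rmap (P : Cᵒᵖ ⥤ SemilatInfCat.{w}) {A B : C} (f : A ⟶ B) :
    Fib P B → Fib P A :=
  fun x => (P.map f.op) x

variable (P : Cᵒᵖ ⥤ SemilatInfCat.{w})

/-- An elementary doctrine: fibered equalities `δ A ∈ P (A ⨯ A)` such that
`E_e(α) = P⟨pr1,pr2⟩(α) ⊓ P⟨pr2,pr3⟩(δ A)` is left adjoint to reindexing along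
`e = ⟨pr1,pr2,pr2⟩ : X ⨯ A ⟶ (X ⨯ A) ⨯ A`. -/
structure IsElementary where
  δ : ∀ A : C, Fib P (A ⨯ A)
  adj :
    ∀ (X A : C) (α : Fib P (X ⨯ A)) (β : Fib P ((X ⨯ A) ⨯ A)),
      (rmap P (prod.fst : (X ⨯ A) ⨯ A ⟶ X ⨯ A) α ⊓
          rmap P (prod.lift (prod.fst ≫ prod.snd) prod.snd : (X ⨯ A) ⨯ A ⟶ A ⨯ A) (δ A) ≤ β)
        ↔ α ≤ rmap P (prod.lift (𝟙 (X ⨯ A)) prod.snd : X ⨯ A ⟶ (X ⨯ A) ⨯ A) β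

/-- A `P`-equivalence relation over `A`. -/
structure IsEqRel (hE : IsElementary P) {A : C} (ρ : Fib P (A ⨯ A)) : Prop where
  refl : hE.δ A ≤ ρ
  symm : ρ = rmap P (prod.lift prod.snd prod.fst : A ⨯ A ⟶ A ⨯ A) ρ
  trans :
    rmap P (prod.fst : (A ⨯ A) ⨯ A ⟶ A ⨯ A) ρ ⊓
        rmap P (prod.lift (prod.fst ≫ prod.snd) prod.snd : (A ⨯ A) ⨯ A ⟶ A ⨯ A) ρ ≤
      rmap P (prod.lift (prod.fst ≫ prod.fst) prod.snd : (A ⨯ A) ⨯ A ⟶ A ⨯ A) ρ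

/-- An elementary existential doctrine, together with the induced left adjoints
`∃_f` along all arrows, satisfying the adjunction law, Frobenius reciprocity, and
the Beck–Chevalley condition along pullbacks of projections. -/
structure IsExistential extends IsElementary P where
  E : ∀ {A B : C}, (A ⟶ B) → Fib P A → Fib P B
  adjE : ∀ {A B : C} (f : A ⟶ B) (α : Fib P A) (β : Fib P B),
    E f α ≤ β ↔ α ≤ rmap P f β
  frobenius : ∀ {A B : C} (f : A ⟶ B) (α : Fib P A) (β : Fib P B),
    E f (α ⊓ rmap P f β) = E f α ⊓ β
  beckChevalley : ∀ {B A A' : C} (f : A' ⟶ A) (β : Fib P (B ⨯ A)),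
    E (prod.snd : B ⨯ A' ⟶ A') (rmap P (prod.map (𝟙 B) f) β) =
      rmap P f (E (prod.snd : B ⨯ A ⟶ A) β)

/-- Descent data for a relation `ρ` over `A`. -/
def Des {A : C} (ρ : Fib P (A ⨯ A)) : Set (Fib P A) :=
  {α | rmap P (prod.fst : A ⨯ A ⟶ A) α ⊓ ρ ≤ rmap P (prod.snd : A ⨯ A ⟶ A) α}

/-- Comprehensive diagonals: `f = g` iff `⊤ = P⟨f,g⟩(δ)`. -/
def ComprehensiveDiagonals (hE : IsElementary P) : Prop :=
  ∀ {X A : C} (f g : X ⟶ A), f = g ↔ rmap P (prod.lift f g) (hE.δ A) = ⊤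

/-- (Weak) comprehension structure. -/
structure Comprehension where
  cObj : ∀ {A : C}, Fib P A → C
  cArr : ∀ {A : C} (α : Fib P A), cObj α ⟶ A
  cTop : ∀ {A : C} (α : Fib P A), rmap P (cArr α) α = ⊤
  cUniv : ∀ {A : C} (α : Fib P A) {Y : C} (f : Y ⟶ A),
    rmap P f α = ⊤ → ∃ k : Y ⟶ cObj α, k ≫ cArr α = f

/-- Full comprehension. -/
def Comprehension.Full (hC : Comprehension P) : Prop :=
  ∀ {A : C} (α β : Fib P A), α ≤ β ↔ rmap P (hC.cArr α) β = ⊤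

/-- Strong comprehension: comprehension arrows are monic. -/
def Comprehension.Strong (hC : Comprehension P) : Prop :=
  ∀ {A : C} (α : Fib P A), Mono (hC.cArr α)

/-- `P`-injective arrow. -/
def PInj (hE : IsElementary P) {X A : C} (f : X ⟶ A) : Prop :=
  rmap P (prod.map f f) (hE.δ A) = hE.δ X

/-- `P`-surjective arrow. -/
def PSurj (hEx : IsExistential P) {X A : C} (f : X ⟶ A) : Prop :=
  hEx.E f (⊤ : Fib P X) = ⊤

/-- The product relation `ρ ⊠ σ` on `(A ⨯ B) ⨯ (A ⨯ B)`. -/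
def boxprod {A B : C} (ρ : Fib P (A ⨯ A)) (σ : Fib P (B ⨯ B)) :
    Fib P ((A ⨯ B) ⨯ (A ⨯ B)) :=
  rmap P (prod.map prod.fst prod.fst) ρ ⊓ rmap P (prod.map prod.snd prod.snd) σ


section Aux

omit [HasFiniteProducts C] in
lemma rmap_comp {A B D : C} (f : A ⟶ B) (g : B ⟶ D) (x : Fib P D) :
    rmap P (f ≫ g) x = rmap P f (rmap P g x) := by
  simp [rmap, op_comp, P.map_comp]

omit [HasFiniteProducts C] in
lemma rmap_id {A : C} (x : Fib P A) : rmap P (𝟙 A) x = x := by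
  simp [rmap]

omit [HasFiniteProducts C] in
lemma rmap_top {A B : C} (f : A ⟶ B) : rmap P f (⊤ : Fib P B) = ⊤ :=
  map_top (show InfTopHom (P.obj (op B)) (P.obj (op A)) from P.map f.op)

omit [HasFiniteProducts C] in
lemma rmap_inf {A B : C} (f : A ⟶ B) (x y : Fib P B) :
    rmap P f (x ⊓ y) = rmap P f x ⊓ rmap P f y :=
  map_inf (show InfTopHom (P.obj (op B)) (P.obj (op A)) from P.map f.op) x y

omit [HasFiniteProducts C] in
lemma rmap_mono {A B : C} (f : A ⟶ B) {x y : Fib P B} (h : x ≤ y) :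
    rmap P f x ≤ rmap P f y :=
  OrderHomClass.mono (show InfTopHom (P.obj (op B)) (P.obj (op A)) from P.map f.op) h

variable {P}

/-- `P⟨pr2,pr2⟩ δ = ⊤`. -/
lemma diag_top (hE : IsElementary P) (X A : C) :
    rmap P (prod.lift prod.snd prod.snd : X ⨯ A ⟶ A ⨯ A) (hE.δ A) = ⊤ := by
  have h := (hE.adj X A ⊤
      (rmap P (prod.lift (prod.fst ≫ prod.snd) prod.snd : (X ⨯ A) ⨯ A ⟶ A ⨯ A) (hE.δ A))).mp
      inf_le_right
  rw [← rmap_comp] at h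
  have hc : (prod.lift (𝟙 (X ⨯ A)) prod.snd ≫
      prod.lift (prod.fst ≫ prod.snd) prod.snd : X ⨯ A ⟶ A ⨯ A) =
      prod.lift prod.snd prod.snd := by
    apply Limits.prod.hom_ext <;> simp [prod.lift_fst, prod.lift_snd, prod.lift_fst_assoc, prod.lift_snd_assoc]
  rw [hc] at h
  exact le_antisymm le_top h

/-- `P⟨f,f⟩ δ = ⊤`. -/
lemma diag_pair (hE : IsElementary P) {A Q : C} (f : A ⟶ Q) :
    rmap P (prod.lift f f) (hE.δ Q) = ⊤ := by
  have hc : (prod.lift f f : A ⟶ Q ⨯ Q) =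
      prod.lift (𝟙 A) f ≫ prod.lift prod.snd prod.snd := by
    apply Limits.prod.hom_ext <;> simp [prod.lift_fst, prod.lift_snd, prod.lift_fst_assoc, prod.lift_snd_assoc]
  rw [hc, rmap_comp, diag_top, rmap_top]

/-- Substitutivity of `δ` in the general fiber. -/
lemma delta_sub_gen (hE : IsElementary P) (X A : C) (θ : Fib P (X ⨯ A)) :
    rmap P (prod.fst : (X ⨯ A) ⨯ A ⟶ X ⨯ A) θ ⊓
        rmap P (prod.lift (prod.fst ≫ prod.snd) prod.snd : (X ⨯ A) ⨯ A ⟶ A ⨯ A) (hE.δ A) ≤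
      rmap P (prod.lift (prod.fst ≫ prod.fst) prod.snd : (X ⨯ A) ⨯ A ⟶ X ⨯ A) θ := by
  apply (hE.adj X A θ _).mpr
  rw [← rmap_comp]
  have hc : (prod.lift (𝟙 (X ⨯ A)) prod.snd ≫
      prod.lift (prod.fst ≫ prod.fst) prod.snd : X ⨯ A ⟶ X ⨯ A) = 𝟙 (X ⨯ A) := by
    apply Limits.prod.hom_ext <;> simp [prod.lift_fst, prod.lift_snd, prod.lift_fst_assoc, prod.lift_snd_assoc]
  rw [hc, rmap_id]

/-- `P(pr1) γ ⊓ δ ≤ P(pr2) γ`. -/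
lemma delta_sub (hE : IsElementary P) {Q : C} (γ : Fib P Q) :
    rmap P (prod.fst : Q ⨯ Q ⟶ Q) γ ⊓ hE.δ Q ≤ rmap P (prod.snd : Q ⨯ Q ⟶ Q) γ := by
  have h := delta_sub_gen hE Q Q (rmap P (prod.snd : Q ⨯ Q ⟶ Q) γ)
  have h2 := rmap_mono P
    (prod.lift (prod.lift prod.fst prod.fst) prod.snd : Q ⨯ Q ⟶ (Q ⨯ Q) ⨯ Q) h
  rw [rmap_inf] at h2
  simp only [← rmap_comp] at h2
  have c1 : (prod.lift (prod.lift prod.fst prod.fst) prod.snd ≫ prod.fst ≫ prod.snd :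
      Q ⨯ Q ⟶ Q) = prod.fst := by simp [prod.lift_fst, prod.lift_snd, prod.lift_fst_assoc, prod.lift_snd_assoc]
  have c2 : (prod.lift (prod.lift prod.fst prod.fst) prod.snd ≫
      prod.lift (prod.fst ≫ prod.snd) prod.snd : Q ⨯ Q ⟶ Q ⨯ Q) = 𝟙 _ := by
    apply Limits.prod.hom_ext <;> simp [prod.lift_fst, prod.lift_snd, prod.lift_fst_assoc, prod.lift_snd_assoc]
  have c3 : (prod.lift (prod.lift prod.fst prod.fst) prod.snd ≫
      prod.lift (prod.fst ≫ prod.fst) prod.snd ≫ prod.snd : Q ⨯ Q ⟶ Q) = prod.snd := by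
    simp [prod.lift_fst, prod.lift_snd, prod.lift_fst_assoc, prod.lift_snd_assoc]
  rw [c1, c2, c3, rmap_id] at h2
  exact h2

/-- In an elementary existential doctrine, `∃_q` is computed from `∃_{pr}` and `δ`. -/
lemma E_eq_formula (hP : IsExistential P) {A Q : C} (q : A ⟶ Q) (α : Fib P A) :
    hP.E q α = hP.E (prod.snd : A ⨯ Q ⟶ Q)
      (rmap P (prod.fst : A ⨯ Q ⟶ A) α ⊓ rmap P (prod.map q (𝟙 Q)) (hP.δ Q)) := by
  apply le_antisymm
  · apply (hP.adjE q α _).mpr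
    have h : rmap P (prod.fst : A ⨯ Q ⟶ A) α ⊓ rmap P (prod.map q (𝟙 Q)) (hP.δ Q) ≤
        rmap P (prod.snd : A ⨯ Q ⟶ Q) (hP.E (prod.snd : A ⨯ Q ⟶ Q) _) :=
      (hP.adjE _ _ _).mp le_rfl
    have h2 := rmap_mono P (prod.lift (𝟙 A) q) h
    rw [← rmap_comp, show prod.lift (𝟙 A) q ≫ (prod.snd : A ⨯ Q ⟶ Q) = q by simp [prod.lift_fst, prod.lift_snd, prod.lift_fst_assoc, prod.lift_snd_assoc]] at h2
    refine le_trans ?_ h2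
    rw [rmap_inf, ← rmap_comp, ← rmap_comp,
      show prod.lift (𝟙 A) q ≫ (prod.fst : A ⨯ Q ⟶ A) = 𝟙 A by simp [prod.lift_fst, prod.lift_snd, prod.lift_fst_assoc, prod.lift_snd_assoc],
      show prod.lift (𝟙 A) q ≫ prod.map q (𝟙 Q) = prod.lift q q by
        apply Limits.prod.hom_ext <;> simp [prod.lift_fst, prod.lift_snd, prod.lift_fst_assoc, prod.lift_snd_assoc],
      rmap_id, diag_pair hP.toIsElementary q]
    exact le_inf le_rfl le_top
  · apply (hP.adjE _ _ _).mpr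
    have hu : α ≤ rmap P q (hP.E q α) := (hP.adjE q α _).mp le_rfl
    refine le_trans (inf_le_inf_right _ (rmap_mono P prod.fst hu)) ?_
    rw [← rmap_comp, show (prod.fst : A ⨯ Q ⟶ A) ≫ q = prod.map q (𝟙 Q) ≫ prod.fst by simp,
      rmap_comp, ← rmap_inf]
    refine le_trans (rmap_mono P _ (delta_sub hP.toIsElementary (hP.E q α))) ?_
    rw [← rmap_comp, show prod.map q (𝟙 Q) ≫ (prod.snd : Q ⨯ Q ⟶ Q) = prod.snd by simp]

/-- Key computation: `P(q)(∃_q α) = ∃_{pr2}(P(pr1)α ⊓ ρ)` when `ρ = P(q ⨯ q)(δ)`. -/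
lemma rmap_E_eq (hP : IsExistential P) {A Q : C} (q : A ⟶ Q) (ρ : Fib P (A ⨯ A))
    (heff : ρ = rmap P (prod.map q q) (hP.δ Q)) (α : Fib P A) :
    rmap P q (hP.E q α) =
      hP.E (prod.snd : A ⨯ A ⟶ A) (rmap P (prod.fst : A ⨯ A ⟶ A) α ⊓ ρ) := by
  rw [E_eq_formula hP q α, ← hP.beckChevalley q]
  congr 1
  rw [rmap_inf, ← rmap_comp, ← rmap_comp,
    show prod.map (𝟙 A) q ≫ (prod.fst : A ⨯ Q ⟶ A) = prod.fst by simp,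
    show prod.map (𝟙 A) q ≫ prod.map q (𝟙 Q) = prod.map q q by
      rw [prod.map_map, Category.id_comp, Category.comp_id],
    heff]

end Aux

/-- In an elementary existential doctrine, an effective quotient
arrow `q : A ⟶ Q` of a `P`-equivalence relation `ρ` is of effective descent
(reindexing along `q` is an isomorphism from `P(Q)` onto the descent data `Des ρ`)
if and only if `q` is `P`-surjective, i.e. `∃_q ⊤ = ⊤`. -/
theorem effective_quotient_descent_iff_surjective
    (hP : IsExistential P) {A Q : C} (ρ : Fib P (A ⨯ A))
    (hρ : IsEqRel P hP.toIsElementary ρ) (q : A ⟶ Q)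
    (heff : ρ = rmap P (prod.map q q) (hP.δ Q))
    (huniv : ∀ {Y : C} (f : A ⟶ Y), ρ ≤ rmap P (prod.map f f) (hP.δ Y) →
      ∃! h : Q ⟶ Y, q ≫ h = f) :
    Set.BijOn (rmap P q) Set.univ (Des P ρ) ↔ PSurj P hP q := by
  constructor
  · intro hbij
    have hu : (⊤ : Fib P A) ≤ rmap P q (hP.E q ⊤) := (hP.adjE q ⊤ _).mp le_rfl
    have h1 : rmap P q (hP.E q ⊤) = rmap P q ⊤ := by
      rw [rmap_top]; exact le_antisymm le_top hu
    exact hbij.injOn (Set.mem_univ _) (Set.mem_univ _) h1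
  · intro hsurj
    have hq : ∀ α : Fib P A, α ∈ Des P ρ → rmap P q (hP.E q α) = α := by
      intro α hα
      refine le_antisymm ?_ ((hP.adjE q α _).mp le_rfl)
      rw [rmap_E_eq hP q ρ heff α]
      exact (hP.adjE _ _ _).mpr hα
    refine ⟨?_, ?_, ?_⟩
    · intro β _
      show rmap P (prod.fst : A ⨯ A ⟶ A) (rmap P q β) ⊓ ρ ≤
        rmap P (prod.snd : A ⨯ A ⟶ A) (rmap P q β)
      rw [← rmap_comp, show (prod.fst : A ⨯ A ⟶ A) ≫ q = prod.map q q ≫ prod.fst by simp,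
        rmap_comp, heff, ← rmap_inf]
      refine le_trans (rmap_mono P _ (delta_sub hP.toIsElementary β)) ?_
      rw [← rmap_comp, show prod.map q q ≫ (prod.snd : Q ⨯ Q ⟶ Q) = prod.snd ≫ q by simp,
        rmap_comp]
    · intro β₁ _ β₂ _ h
      have key : ∀ β : Fib P Q, hP.E q (rmap P q β) = β := by
        intro β
        have hf := hP.frobenius q ⊤ β
        rw [top_inf_eq, hsurj, top_inf_eq] at hf
        exact hf
      rw [← key β₁, ← key β₂, h]
    · intro α hα
      exact ⟨hP.E q α, Set.mem_univ _, hq α hα⟩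

end DoctrinePaper
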